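/- Let d ≥ 1 be an integer with d ≠ 2, and let F, G : I → ℝ be differentiable functions on an interval I satisfying F' = −F² − G and G' = F(1 − d·G), with 1 − d·G(t) > 0 for all t ∈ I. Then the quantity E(t) = ((d−2) F(t)² + 1 − 2 G(t)) / (1 − d·G(t))^{2/d} is constant on I. Equivalently, F² = (2G − 1)/(d − 2) + C_d (1 − d G)^{2/d} along the trajectory, where C_d = (1 − 2G(0) + (d−2) F(0)²) / ((d−2)(1 − d G(0))^{2/d}). -/

import Mathlib

/-- First integral of the radially symmetric system `F' = −F² − G`,
`G' = F(1 − dG)` in dimension `d ≠ 2`: the quantity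
`((d−2)F² + 1 − 2G)/(1 − dG)^{2/d}` is constant along trajectories
staying in the half-plane `1 − dG > 0`. -/
theorem radial_first_integral_d_ne_two (d : ℕ) (hd : 1 ≤ d) (hd2 : d ≠ 2)
    (I : Set ℝ) (hI : Convex ℝ I) (F G : ℝ → ℝ)
    (hF : ∀ t ∈ I, HasDerivWithinAt F (-(F t) ^ 2 - G t) I t)
    (hG : ∀ t ∈ I, HasDerivWithinAt G (F t * (1 - (d : ℝ) * G t)) I t)
    (hpos : ∀ t ∈ I, 0 < 1 - (d : ℝ) * G t) :
    ∀ t ∈ I, ∀ t' ∈ I,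
      (((d : ℝ) - 2) * (F t) ^ 2 + 1 - 2 * G t) / (1 - (d : ℝ) * G t) ^ ((2 : ℝ) / d)
        = (((d : ℝ) - 2) * (F t') ^ 2 + 1 - 2 * G t') /
            (1 - (d : ℝ) * G t') ^ ((2 : ℝ) / d) := by
  have hd0 : (d : ℝ) ≠ 0 := by positivity
  set c : ℝ := -((2 : ℝ) / d) with hc
  set E : ℝ → ℝ := fun t =>
    (((d : ℝ) - 2) * (F t) ^ 2 + 1 - 2 * G t) * (1 - (d : ℝ) * G t) ^ c with hE
  have hE0 : ∀ t ∈ I, HasDerivWithinAt E 0 I t := by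
    intro t ht
    have hDpos := hpos t ht
    have hD : HasDerivWithinAt (fun t => 1 - (d : ℝ) * G t)
        (-((d : ℝ) * (F t * (1 - (d : ℝ) * G t)))) I t := by
      exact ((hG t ht).const_mul (d : ℝ)).const_sub 1
    have hP : HasDerivWithinAt (fun t => (1 - (d : ℝ) * G t) ^ c)
        (-((d : ℝ) * (F t * (1 - (d : ℝ) * G t))) * c * (1 - (d : ℝ) * G t) ^ (c - 1)) I t :=
      hD.rpow_const (Or.inl hDpos.ne')
    have hN : HasDerivWithinAt (fun t => ((d : ℝ) - 2) * (F t) ^ 2 + 1 - 2 * G t)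
        (((d : ℝ) - 2) * ((2 : ℕ) * F t ^ (2 - 1) * (-(F t) ^ 2 - G t)) + 0
          - 2 * (F t * (1 - (d : ℝ) * G t))) I t := by
      exact ((((hF t ht).pow 2).const_mul ((d : ℝ) - 2)).add
        (hasDerivWithinAt_const t I (1 : ℝ))).sub ((hG t ht).const_mul 2)
    have h := hN.mul hP
    refine h.congr_deriv ?_
    symm
    have hsub : (1 - (d : ℝ) * G t) ^ (c - 1)
        = (1 - (d : ℝ) * G t) ^ c / (1 - (d : ℝ) * G t) := by
      rw [Real.rpow_sub hDpos, Real.rpow_one]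
    rw [hsub, hc]
    field_simp
    ring
  have key : ∀ t ∈ I, ∀ t' ∈ I, E t = E t' := by
    intro t ht t' ht'
    have := (hI.norm_image_sub_le_of_norm_hasDerivWithin_le
      (f' := fun _ => (0 : ℝ)) (C := 0) hE0 (fun x _ => by simp) ht ht')
    simp only [zero_mul] at this
    have := norm_le_zero_iff.mp this
    linarith [sub_eq_zero.mp this]
  intro t ht t' ht'
  have h1 : ∀ s ∈ I, (((d : ℝ) - 2) * (F s) ^ 2 + 1 - 2 * G s)
      / (1 - (d : ℝ) * G s) ^ ((2 : ℝ) / d) = E s := by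
    intro s hs
    simp only [hE]
    rw [div_eq_mul_inv, ← Real.rpow_neg (hpos s hs).le]
  rw [h1 t ht, h1 t' ht', key t ht t' ht']
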